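/- Let Ω ⊆ ℝ^m be open, u ∈ Ω, G : Ω → ℝ^m strongly differentiable at u with invertible derivative M := G'(u). Then for every ε ∈ (0,1) there is δ > 0 such that for all x ∈ Ω and r > 0 with B̄(x,r) ⊆ B̄(u,δ), one has ℓ_x(B̄(x,(1−ε)r)) ⊆ G(B̄(x,r)) ⊆ ℓ_x(B̄(x,(1+ε)r)), where ℓ_x(z) := G(x) + M(z−x). In particular G(u) is an interior point of the range of G. -/

import Mathlib

open Set Metric

/-- `f` is strongly (strictly) differentiable at `u`, an interior point of `s`,
with derivative `A`. -/
def HasStrongDerivAt {m n : ℕ} (f : (Fin m → ℝ) → (Fin n → ℝ))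
    (A : (Fin m → ℝ) →L[ℝ] (Fin n → ℝ)) (s : Set (Fin m → ℝ)) (u : Fin m → ℝ) : Prop :=
  ∀ ε > (0 : ℝ), ∃ δ > (0 : ℝ), ball u δ ⊆ s ∧
    ∀ x ∈ ball u δ, ∀ y ∈ ball u δ, ‖f x - f y - A (x - y)‖ ≤ ε * ‖x - y‖

/-- The quantitative inverse-function-type theorem for strongly differentiable maps
with invertible derivative (the space `Fin m → ℝ` carries the sup-norm, so closed
balls are cubes). -/
theorem strongDeriv_inverse_inclusions {m : ℕ} (Ω : Set (Fin m → ℝ)) (hΩ : IsOpen Ω)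
    (u : Fin m → ℝ) (hu : u ∈ Ω) (G : (Fin m → ℝ) → (Fin m → ℝ))
    (M : (Fin m → ℝ) ≃L[ℝ] (Fin m → ℝ))
    (hG : HasStrongDerivAt G (M : (Fin m → ℝ) →L[ℝ] (Fin m → ℝ)) Ω u) :
    (∀ ε ∈ Ioo (0 : ℝ) 1, ∃ δ > (0 : ℝ), closedBall u δ ⊆ Ω ∧
      ∀ x ∈ Ω, ∀ r > (0 : ℝ), closedBall x r ⊆ closedBall u δ →
        (fun z => G x + M (z - x)) '' closedBall x ((1 - ε) * r) ⊆ G '' closedBall x r ∧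
        G '' closedBall x r ⊆ (fun z => G x + M (z - x)) '' closedBall x ((1 + ε) * r)) ∧
    G u ∈ interior (G '' Ω) := by
  set N : (Fin m → ℝ) →L[ℝ] (Fin m → ℝ) := (M.symm : (Fin m → ℝ) →L[ℝ] (Fin m → ℝ)) with hN
  have main : ∀ ε ∈ Ioo (0 : ℝ) 1, ∃ δ > (0 : ℝ), closedBall u δ ⊆ Ω ∧
      ∀ x ∈ Ω, ∀ r > (0 : ℝ), closedBall x r ⊆ closedBall u δ →
        (fun z => G x + M (z - x)) '' closedBall x ((1 - ε) * r) ⊆ G '' closedBall x r ∧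
        G '' closedBall x r ⊆ (fun z => G x + M (z - x)) '' closedBall x ((1 + ε) * r) := by
    intro ε hε
    obtain ⟨hε0, hε1⟩ := hε
    set C : ℝ := ‖N‖ + 1 with hC
    have hC0 : 0 < C := by positivity
    obtain ⟨δ₀, hδ₀, hball, hest⟩ := hG (ε / C) (by positivity)
    refine ⟨δ₀ / 2, by positivity, (closedBall_subset_ball (by linarith)).trans hball, ?_⟩
    intro x hxΩ r hr hxr
    have hxmem : x ∈ closedBall u (δ₀ / 2) := hxr (mem_closedBall_self hr.le)
    -- the key error estimate, transported through M.symm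
    have key : ∀ a ∈ closedBall x r, ∀ b ∈ closedBall x r,
        ‖N (G a - G b - M (a - b))‖ ≤ ε * ‖a - b‖ := by
      intro a ha b hb
      have ha' : a ∈ ball u δ₀ := closedBall_subset_ball (by linarith) (hxr ha)
      have hb' : b ∈ ball u δ₀ := closedBall_subset_ball (by linarith) (hxr hb)
      calc ‖N (G a - G b - M (a - b))‖ ≤ ‖N‖ * ‖G a - G b - M (a - b)‖ := N.le_opNorm _
        _ ≤ ‖N‖ * (ε / C * ‖a - b‖) := by
            exact mul_le_mul_of_nonneg_left (hest a ha' b hb') (norm_nonneg _)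
        _ ≤ ε * ‖a - b‖ := by
            rw [hC]
            have h1 : ‖N‖ * (ε / (‖N‖ + 1) * ‖a - b‖) =
                (‖N‖ / (‖N‖ + 1)) * (ε * ‖a - b‖) := by ring
            rw [h1]
            have h2 : ‖N‖ / (‖N‖ + 1) ≤ 1 := by
              rw [div_le_one (by positivity)]; linarith [norm_nonneg N]
            nlinarith [norm_nonneg (a - b), hε0.le, mul_nonneg hε0.le (norm_nonneg (a-b))]
    constructor
    · -- lower inclusion, via Banach fixed point
      rintro w ⟨z, hz, rfl⟩
      have hzr : ‖z - x‖ ≤ (1 - ε) * r := by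
        rw [mem_closedBall, dist_eq_norm] at hz; exact hz
      have hzr' : z ∈ closedBall x r := by
        rw [mem_closedBall, dist_eq_norm]
        nlinarith
      set F : (Fin m → ℝ) → (Fin m → ℝ) := fun y => z - N (G y - G x - M (y - x)) with hF
      have hFmap : ∀ y ∈ closedBall x r, F y ∈ closedBall x r := by
        intro y hy
        have h1 : ‖F y - z‖ ≤ ε * ‖y - x‖ := by
          have hkey := key y hy x (mem_closedBall_self hr.le)
          have heq : F y - z = -(N (G y - G x - M (y - x))) := by
            simp only [hF]; abel
          rw [heq, norm_neg]; exact hkey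
        have h2 : ‖y - x‖ ≤ r := by rw [mem_closedBall, dist_eq_norm] at hy; exact hy
        rw [mem_closedBall, dist_eq_norm]
        calc ‖F y - x‖ ≤ ‖F y - z‖ + ‖z - x‖ := norm_sub_le_norm_sub_add_norm_sub _ _ _
          _ ≤ ε * ‖y - x‖ + (1 - ε) * r := add_le_add h1 hzr
          _ ≤ r := by nlinarith
      have hεnn : (ε.toNNReal : ℝ) = ε := Real.coe_toNNReal ε hε0.le
      have hlip : ∀ a ∈ closedBall x r, ∀ b ∈ closedBall x r,
          dist (F a) (F b) ≤ ε * dist a b := by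
        intro a ha b hb
        have h1 : F a - F b = N (G b - G a - M (b - a)) := by
          have e1 : N (G b - G a - M (b - a))
              = N (G b - G x - M (b - x)) - N (G a - G x - M (a - x)) := by
            rw [← map_sub]
            congr 1
            simp only [map_sub]; abel
          simp only [hF]
          rw [e1]
          abel
        rw [dist_eq_norm, dist_eq_norm, h1, norm_sub_rev a b]
        exact key b hb a ha
      -- set up the fixed point on the subtype
      haveI : CompleteSpace (closedBall x r) := (isClosed_closedBall : IsClosed (closedBall x r)).completeSpace_coe
      haveI : Nonempty (closedBall x r) := ⟨⟨x, mem_closedBall_self hr.le⟩⟩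
      set F' : closedBall x r → closedBall x r := fun y => ⟨F y, hFmap y y.2⟩ with hF'
      have hcontr : ContractingWith ε.toNNReal F' := by
        constructor
        · rw [← NNReal.coe_lt_coe, hεnn]; exact hε1
        · apply LipschitzWith.of_dist_le_mul
          intro a b
          rw [Subtype.dist_eq, Subtype.dist_eq, hεnn]
          exact hlip a a.2 b b.2
      obtain ⟨y, hyfix⟩ : ∃ y : closedBall x r, F' y = y :=
        ⟨_, hcontr.fixedPoint_isFixedPt⟩
      have hfix : F (y : Fin m → ℝ) = (y : Fin m → ℝ) := congrArg Subtype.val hyfix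
      simp only [hF] at hfix
      refine ⟨(y : Fin m → ℝ), y.2, ?_⟩
      have h1 : N (G (y : Fin m → ℝ) - G x - M ((y : Fin m → ℝ) - x))
          = z - (y : Fin m → ℝ) := by
        conv_rhs => rw [← hfix]
        abel
      have h2 : G (y : Fin m → ℝ) - G x - M ((y : Fin m → ℝ) - x)
          = M (z - (y : Fin m → ℝ)) := by
        have := congrArg M h1
        simpa [hN] using this
      have hMzy : M (z - (y : Fin m → ℝ))
          = M (z - x) - M ((y : Fin m → ℝ) - x) := by
        rw [← map_sub]; congr 1; abel
      rw [hMzy] at h2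
      have h4 : G (y : Fin m → ℝ) - G x = M (z - x) := sub_left_inj.mp h2
      show G (y : Fin m → ℝ) = G x + M (z - x)
      exact sub_eq_iff_eq_add'.mp h4
    · -- upper inclusion
      rintro w ⟨y, hy, rfl⟩
      have hyr : ‖y - x‖ ≤ r := by rw [mem_closedBall, dist_eq_norm] at hy; exact hy
      refine ⟨x + N (G y - G x), ?_, ?_⟩
      · rw [mem_closedBall, dist_eq_norm]
        have hsplit : x + N (G y - G x) - x
            = (y - x) + N (G y - G x - M (y - x)) := by
          simp only [hN, map_sub, ContinuousLinearEquiv.coe_coe,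
            ContinuousLinearEquiv.symm_apply_apply]
          abel
        rw [hsplit]
        calc ‖(y - x) + N (G y - G x - M (y - x))‖
            ≤ ‖y - x‖ + ‖N (G y - G x - M (y - x))‖ := norm_add_le _ _
          _ ≤ ‖y - x‖ + ε * ‖y - x‖ := by
              have := key y hy x (mem_closedBall_self hr.le)
              linarith
          _ = (1 + ε) * ‖y - x‖ := by ring
          _ ≤ (1 + ε) * r := by nlinarith
      · simp only [hN, add_sub_cancel_left, ContinuousLinearEquiv.coe_coe,
          ContinuousLinearEquiv.apply_symm_apply]
        abel
  refine ⟨main, ?_⟩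
  obtain ⟨δ, hδ, hδΩ, h⟩ := main (1/2) ⟨by norm_num, by norm_num⟩
  obtain ⟨h1, _⟩ := h u hu δ hδ (Subset.refl _)
  set ℓ : Homeomorph (Fin m → ℝ) (Fin m → ℝ) :=
    (Homeomorph.subRight u).trans ((M.toHomeomorph).trans (Homeomorph.addLeft (G u)))
    with hℓ
  have hℓeq : (fun z => G u + M (z - u)) = ⇑ℓ := rfl
  have hsub : ℓ '' ball u ((1 - 1/2) * δ) ⊆ G '' Ω := by
    intro w hw
    have : w ∈ (fun z => G u + M (z - u)) '' closedBall u ((1 - 1/2) * δ) := by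
      rw [hℓeq]
      exact image_mono ball_subset_closedBall hw
    obtain ⟨y, hy, hGy⟩ := h1 this
    exact ⟨y, hδΩ hy, hGy⟩
  refine mem_interior.2 ⟨ℓ '' ball u ((1 - 1/2) * δ), hsub,
    ℓ.isOpenMap _ isOpen_ball, ⟨u, ?_, ?_⟩⟩
  · exact mem_ball_self (by nlinarith)
  · show G u + M (u - u) = G u
    simp
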